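/- Let λ_0, λ_1 > 0 and α ∈ (0,1). Then there exists exactly one pair (p,q) ∈ (0,1)² satisfying both 2pq = α(2+p-q) and α(λ_1-λ_0)·log(p(1-q)/((1-p)q)) + λ_0·log(p²(1-q)/(1-p)) - 2λ_1·log(1-p) = 0. -/

import Mathlib

open Filter Set MeasureTheory Topology
open scoped ENNReal

private lemma aux_add_atBot {l : Filter ℝ} {f g : ℝ → ℝ} {c : ℝ}
    (hf : Tendsto f l atBot) (hg : Tendsto g l (𝓝 c)) :
    Tendsto (fun x => f x + g x) l atBot :=
  tendsto_atBot_add_right_of_ge' l (c + 1) hf (hg.eventually_le_const (by linarith))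

private lemma aux_add_atTop {l : Filter ℝ} {f g : ℝ → ℝ} {c : ℝ}
    (hf : Tendsto f l atTop) (hg : Tendsto g l (𝓝 c)) :
    Tendsto (fun x => f x + g x) l atTop :=
  tendsto_atTop_add_right_of_le' l (c - 1) hf (hg.eventually_const_le (by linarith))

/-- the value of `q` forced by the first equation -/
noncomputable def qf (α p : ℝ) : ℝ := α * (2 + p) / (2 * p + α)

/-- the second equation, with `q = qf α p` substituted, written in split-log form -/
noncomputable def Ff (lam0 lam1 α p : ℝ) : ℝ :=
  (α * (lam1 - lam0) + 2 * lam0) * Real.log p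
    + (α * (lam1 - lam0) + lam0) * Real.log (1 - qf α p)
    - (α * (lam1 - lam0) + lam0 + 2 * lam1) * Real.log (1 - p)
    - (α * (lam1 - lam0)) * Real.log (qf α p)

private lemma qf_pos {α p : ℝ} (hα0 : 0 < α) (hp : 0 < p) : 0 < qf α p := by
  unfold qf
  have h : 0 < 2 * p + α := by linarith
  positivity

private lemma one_sub_qf {α p : ℝ} (hα0 : 0 < α) (hp : 0 < p) :
    1 - qf α p = ((2 - α) * p - α) / (2 * p + α) := by
  unfold qf
  have h : (0:ℝ) < 2 * p + α := by linarith
  field_simp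
  ring

private lemma qf_lt_one {α p : ℝ} (hα0 : 0 < α) (hα1 : α < 1)
    (hpa : α / (2 - α) < p) (hp : 0 < p) : qf α p < 1 := by
  have h2α : (0:ℝ) < 2 - α := by linarith
  have h' : α < p * (2 - α) := (div_lt_iff₀ h2α).mp hpa
  have hden : (0:ℝ) < 2 * p + α := by linarith
  rw [qf, div_lt_one hden]
  nlinarith

private lemma qf_gt {α p : ℝ} (hα0 : 0 < α) (hα1 : α < 1) (hp : 0 < p) (hp1 : p < 1) : α < qf α p := by
  have hden : (0:ℝ) < 2 * p + α := by linarith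
  rw [qf, lt_div_iff₀ hden]
  nlinarith [mul_pos hα0 (show (0:ℝ) < 2 - p - α by linarith)]

private lemma hasDerivAt_qf {α p : ℝ} (hden : (0:ℝ) < 2 * p + α) :
    HasDerivAt (qf α) (α * (α - 4) / (2 * p + α) ^ 2) p := by
  have hnum : HasDerivAt (fun x : ℝ => α * (2 + x)) (α * 1) p :=
    ((hasDerivAt_id p).const_add 2).const_mul α
  have hd : HasDerivAt (fun x : ℝ => 2 * x + α) (2 * 1) p :=
    ((hasDerivAt_id p).const_mul 2).add_const α
  have h : HasDerivAt (fun x : ℝ => α * (2 + x) / (2 * x + α)) _ p := hnum.div hd (ne_of_gt hden)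
  convert h using 1
  · rfl
  ring

private lemma hasDerivAt_Ff {lam0 lam1 α p : ℝ} (hα0 : 0 < α) (hα1 : α < 1)
    (hpa : α / (2 - α) < p) (hp1 : p < 1) :
    HasDerivAt (Ff lam0 lam1 α)
      ((α * (lam1 - lam0) + 2 * lam0) * p⁻¹
        + (α * (lam1 - lam0) + lam0) *
            (-(α * (α - 4) / (2 * p + α) ^ 2) / (1 - qf α p))
        - (α * (lam1 - lam0) + lam0 + 2 * lam1) * (-1 / (1 - p))
        - (α * (lam1 - lam0)) * (α * (α - 4) / (2 * p + α) ^ 2 / qf α p)) p := by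
  have h2α : (0:ℝ) < 2 - α := by linarith
  have hp0 : 0 < p := lt_trans (div_pos hα0 h2α) hpa
  have hden : (0:ℝ) < 2 * p + α := by linarith
  have hq0 : 0 < qf α p := qf_pos hα0 hp0
  have hq1 : qf α p < 1 := qf_lt_one hα0 hα1 hpa hp0
  have hq' := hasDerivAt_qf hden
  have l1 : HasDerivAt (fun x : ℝ => Real.log x) p⁻¹ p := Real.hasDerivAt_log (ne_of_gt hp0)
  have l2 : HasDerivAt (fun x : ℝ => Real.log (1 - qf α x))
      (-(α * (α - 4) / (2 * p + α) ^ 2) / (1 - qf α p)) p :=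
    (hq'.const_sub 1).log (by linarith)
  have l3 : HasDerivAt (fun x : ℝ => Real.log (1 - x)) (-1 / (1 - p)) p :=
    ((hasDerivAt_id p).const_sub 1).log (by simp only [id_eq]; intro h; linarith)
  have l4 : HasDerivAt (fun x : ℝ => Real.log (qf α x))
      (α * (α - 4) / (2 * p + α) ^ 2 / qf α p) p := hq'.log (ne_of_gt hq0)
  exact (((l1.const_mul _).add (l2.const_mul _)).sub (l3.const_mul _)).sub (l4.const_mul _)

private lemma deriv_Ff_pos {lam0 lam1 α p : ℝ} (h0 : 0 < lam0) (h1 : 0 < lam1)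
    (hα0 : 0 < α) (hα1 : α < 1) (hpa : α / (2 - α) < p) (hp1 : p < 1) :
    0 < (α * (lam1 - lam0) + 2 * lam0) * p⁻¹
        + (α * (lam1 - lam0) + lam0) *
            (-(α * (α - 4) / (2 * p + α) ^ 2) / (1 - qf α p))
        - (α * (lam1 - lam0) + lam0 + 2 * lam1) * (-1 / (1 - p))
        - (α * (lam1 - lam0)) * (α * (α - 4) / (2 * p + α) ^ 2 / qf α p) := by
  have h2α : (0:ℝ) < 2 - α := by linarith
  have hp0 : 0 < p := lt_trans (div_pos hα0 h2α) hpa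
  have hden : (0:ℝ) < 2 * p + α := by linarith
  have hq0 : 0 < qf α p := qf_pos hα0 hp0
  have hq1 : qf α p < 1 := qf_lt_one hα0 hα1 hpa hp0
  have hqα : α < qf α p := qf_gt hα0 hα1 hp0 hp1
  set q := qf α p with hqdef
  set r : ℝ := α * (4 - α) / (2 * p + α) ^ 2 with hrdef
  have hr : 0 < r := by
    rw [hrdef]
    exact div_pos (mul_pos hα0 (by linarith)) (pow_pos hden 2)
  have hterm : 0 < (α * (lam1 - lam0) + lam0) / (1 - q) + (α * (lam1 - lam0)) / q := by
    have hq1' : (0:ℝ) < 1 - q := by linarith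
    have heq : (α * (lam1 - lam0) + lam0) / (1 - q) + (α * (lam1 - lam0)) / q
        = ((α * (lam1 - lam0) + lam0) * q + (α * (lam1 - lam0)) * (1 - q)) / ((1 - q) * q) := by
      field_simp
      try ring
    rw [heq]
    apply div_pos
    · nlinarith [mul_pos h0 (sub_pos.mpr hqα), mul_pos hα0 h1]
    · positivity
  have hrw : (α * (lam1 - lam0) + 2 * lam0) * p⁻¹
        + (α * (lam1 - lam0) + lam0) * (-(α * (α - 4) / (2 * p + α) ^ 2) / (1 - q))
        - (α * (lam1 - lam0) + lam0 + 2 * lam1) * (-1 / (1 - p))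
        - (α * (lam1 - lam0)) * (α * (α - 4) / (2 * p + α) ^ 2 / q)
      = (α * (lam1 - lam0) + 2 * lam0) * p⁻¹
        + (α * (lam1 - lam0) + lam0 + 2 * lam1) * (1 - p)⁻¹
        + r * ((α * (lam1 - lam0) + lam0) / (1 - q) + (α * (lam1 - lam0)) / q) := by
    rw [hrdef]
    ring
  rw [hrw]
  have t1 : 0 < (α * (lam1 - lam0) + 2 * lam0) * p⁻¹ := by
    have : 0 < α * (lam1 - lam0) + 2 * lam0 := by nlinarith
    positivity
  have t2 : 0 < (α * (lam1 - lam0) + lam0 + 2 * lam1) * (1 - p)⁻¹ := by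
    have hc : 0 < α * (lam1 - lam0) + lam0 + 2 * lam1 := by nlinarith
    have hp1' : (0:ℝ) < 1 - p := by linarith
    positivity
  have t3 : 0 < r * ((α * (lam1 - lam0) + lam0) / (1 - q) + (α * (lam1 - lam0)) / q) :=
    mul_pos hr hterm
  linarith

private lemma strictMonoOn_Ff {lam0 lam1 α : ℝ} (h0 : 0 < lam0) (h1 : 0 < lam1)
    (hα0 : 0 < α) (hα1 : α < 1) :
    StrictMonoOn (Ff lam0 lam1 α) (Ioo (α / (2 - α)) 1) := by
  apply strictMonoOn_of_deriv_pos (convex_Ioo _ _)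
  · intro x hx
    exact (hasDerivAt_Ff hα0 hα1 hx.1 hx.2).continuousAt.continuousWithinAt
  · intro x hx
    rw [interior_Ioo] at hx
    rw [(hasDerivAt_Ff (lam0 := lam0) (lam1 := lam1) hα0 hα1 hx.1 hx.2).deriv]
    exact deriv_Ff_pos h0 h1 hα0 hα1 hx.1 hx.2

private lemma continuousAt_qf {α x : ℝ} (h : (0:ℝ) < 2 * x + α) : ContinuousAt (qf α) x := by
  unfold qf
  exact ContinuousAt.div (by fun_prop) (by fun_prop) (ne_of_gt h)

private lemma a_mem {α : ℝ} (hα0 : 0 < α) (hα1 : α < 1) :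
    0 < α / (2 - α) ∧ α / (2 - α) < 1 := by
  have h2α : (0:ℝ) < 2 - α := by linarith
  constructor
  · exact div_pos hα0 h2α
  · rw [div_lt_one h2α]; linarith

private lemma qf_at_a {α : ℝ} (hα0 : 0 < α) (hα1 : α < 1) : qf α (α / (2 - α)) = 1 := by
  have h2α : (0:ℝ) < 2 - α := by linarith
  have ha0 : 0 < α / (2 - α) := div_pos hα0 h2α
  have hden : (0:ℝ) < 2 * (α / (2 - α)) + α := by linarith
  rw [qf, div_eq_one_iff_eq (ne_of_gt hden)]
  field_simp
  ring

private lemma tendsto_Ff_a {lam0 lam1 α : ℝ} (h0 : 0 < lam0) (h1 : 0 < lam1)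
    (hα0 : 0 < α) (hα1 : α < 1) :
    Tendsto (Ff lam0 lam1 α) (𝓝[>] (α / (2 - α))) atBot := by
  obtain ⟨ha0, ha1⟩ := a_mem hα0 hα1
  set a := α / (2 - α) with hadef
  have hdena : (0:ℝ) < 2 * a + α := by linarith
  have hmem : Ioo a 1 ∈ 𝓝[>] a := by
    rw [mem_nhdsWithin]
    exact ⟨Iio 1, isOpen_Iio, ha1, fun x hx => ⟨hx.2, hx.1⟩⟩
  have hcq : ContinuousAt (qf α) a := continuousAt_qf hdena
  have hqa : qf α a = 1 := qf_at_a hα0 hα1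
  have hB : 0 < α * (lam1 - lam0) + lam0 := by nlinarith
  have t1 : Tendsto (fun p => 1 - qf α p) (𝓝[>] a) (𝓝[>] (0:ℝ)) := by
    rw [tendsto_nhdsWithin_iff]
    constructor
    · have h : Tendsto (fun p => 1 - qf α p) (𝓝 a) (𝓝 (1 - qf α a)) :=
        (continuousAt_const.sub hcq).tendsto
      rw [hqa, sub_self] at h
      exact h.mono_left nhdsWithin_le_nhds
    · filter_upwards [hmem] with p hp
      have := qf_lt_one hα0 hα1 hp.1 (lt_trans ha0 hp.1)
      exact mem_Ioi.mpr (by linarith)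
  have t2 : Tendsto (fun p => (α * (lam1 - lam0) + lam0) * Real.log (1 - qf α p))
      (𝓝[>] a) atBot :=
    Tendsto.const_mul_atBot hB (Real.tendsto_log_nhdsGT_zero.comp t1)
  have t3 : Tendsto (fun p => (α * (lam1 - lam0) + 2 * lam0) * Real.log p
      - (α * (lam1 - lam0) + lam0 + 2 * lam1) * Real.log (1 - p)
      - (α * (lam1 - lam0)) * Real.log (qf α p)) (𝓝[>] a)
      (𝓝 ((α * (lam1 - lam0) + 2 * lam0) * Real.log a
      - (α * (lam1 - lam0) + lam0 + 2 * lam1) * Real.log (1 - a)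
      - (α * (lam1 - lam0)) * Real.log (qf α a))) := by
    apply Tendsto.mono_left _ nhdsWithin_le_nhds
    apply ContinuousAt.tendsto
    have c1 : ContinuousAt (fun p : ℝ => Real.log p) a := Real.continuousAt_log (ne_of_gt ha0)
    have c2 : ContinuousAt (fun p : ℝ => Real.log (1 - p)) a :=
      (Real.continuousAt_log (by simp; linarith)).comp (continuousAt_const.sub continuousAt_id)
    have c3 : ContinuousAt (fun p : ℝ => Real.log (qf α p)) a :=
      (Real.continuousAt_log (by rw [hqa]; norm_num)).comp hcq
    exact ((continuousAt_const.mul c1).sub (continuousAt_const.mul c2)).sub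
      (continuousAt_const.mul c3)
  exact (aux_add_atBot t2 t3).congr (fun p => by unfold Ff; ring)

private lemma tendsto_Ff_one {lam0 lam1 α : ℝ} (h0 : 0 < lam0) (h1 : 0 < lam1)
    (hα0 : 0 < α) (hα1 : α < 1) :
    Tendsto (Ff lam0 lam1 α) (𝓝[<] (1:ℝ)) atTop := by
  obtain ⟨ha0, ha1⟩ := a_mem hα0 hα1
  have hden1 : (0:ℝ) < 2 * 1 + α := by linarith
  have hcq : ContinuousAt (qf α) 1 := continuousAt_qf hden1
  have hq10 : 0 < qf α 1 := qf_pos hα0 one_pos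
  have hq11 : qf α 1 < 1 := qf_lt_one hα0 hα1 ha1 one_pos
  have hC : 0 < α * (lam1 - lam0) + lam0 + 2 * lam1 := by nlinarith
  have t1 : Tendsto (fun p : ℝ => 1 - p) (𝓝[<] (1:ℝ)) (𝓝[>] (0:ℝ)) := by
    rw [tendsto_nhdsWithin_iff]
    constructor
    · have h : Tendsto (fun p : ℝ => 1 - p) (𝓝 (1:ℝ)) (𝓝 (1 - 1)) :=
        (continuousAt_const.sub continuousAt_id).tendsto
      rw [sub_self] at h
      exact h.mono_left nhdsWithin_le_nhds
    · filter_upwards [self_mem_nhdsWithin] with p hp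
      exact mem_Ioi.mpr (by simp only [mem_Iio] at hp; linarith)
  have t2 : Tendsto (fun p : ℝ => (-(α * (lam1 - lam0) + lam0 + 2 * lam1)) * Real.log (1 - p))
      (𝓝[<] (1:ℝ)) atTop :=
    Tendsto.const_mul_atBot_of_neg (by linarith)
      (Real.tendsto_log_nhdsGT_zero.comp t1)
  have t3 : Tendsto (fun p => (α * (lam1 - lam0) + 2 * lam0) * Real.log p
      + (α * (lam1 - lam0) + lam0) * Real.log (1 - qf α p)
      - (α * (lam1 - lam0)) * Real.log (qf α p)) (𝓝[<] (1:ℝ))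
      (𝓝 ((α * (lam1 - lam0) + 2 * lam0) * Real.log 1
      + (α * (lam1 - lam0) + lam0) * Real.log (1 - qf α 1)
      - (α * (lam1 - lam0)) * Real.log (qf α 1))) := by
    apply Tendsto.mono_left _ nhdsWithin_le_nhds
    apply ContinuousAt.tendsto
    have c1 : ContinuousAt (fun p : ℝ => Real.log p) 1 := Real.continuousAt_log one_ne_zero
    have c2 : ContinuousAt (fun p : ℝ => Real.log (1 - qf α p)) 1 :=
      (Real.continuousAt_log (by linarith)).comp (continuousAt_const.sub hcq)
    have c3 : ContinuousAt (fun p : ℝ => Real.log (qf α p)) 1 :=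
      (Real.continuousAt_log (ne_of_gt hq10)).comp hcq
    exact ((continuousAt_const.mul c1).add (continuousAt_const.mul c2)).sub
      (continuousAt_const.mul c3)
  exact (aux_add_atTop t2 t3).congr (fun p => by unfold Ff; ring)

private lemma exists_Ff_zero {lam0 lam1 α : ℝ} (h0 : 0 < lam0) (h1 : 0 < lam1)
    (hα0 : 0 < α) (hα1 : α < 1) :
    ∃ p ∈ Ioo (α / (2 - α)) 1, Ff lam0 lam1 α p = 0 := by
  obtain ⟨ha0, ha1⟩ := a_mem hα0 hα1
  set a := α / (2 - α) with hadef
  have hmema : Ioo a 1 ∈ 𝓝[>] a := by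
    rw [mem_nhdsWithin]
    exact ⟨Iio 1, isOpen_Iio, ha1, fun x hx => ⟨hx.2, hx.1⟩⟩
  have hmem1 : Ioo a 1 ∈ 𝓝[<] (1:ℝ) := by
    rw [mem_nhdsWithin]
    exact ⟨Ioi a, isOpen_Ioi, ha1, fun x hx => ⟨hx.1, hx.2⟩⟩
  have e1 : ∀ᶠ p in 𝓝[>] a, Ff lam0 lam1 α p < 0 ∧ p ∈ Ioo a 1 :=
    ((tendsto_Ff_a h0 h1 hα0 hα1).eventually (eventually_lt_atBot 0)).and hmema
  have e2 : ∀ᶠ p in 𝓝[<] (1:ℝ), 0 < Ff lam0 lam1 α p ∧ p ∈ Ioo a 1 :=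
    ((tendsto_Ff_one h0 h1 hα0 hα1).eventually (eventually_gt_atTop 0)).and hmem1
  obtain ⟨p1, hF1, hp1⟩ := e1.exists
  obtain ⟨p2, hF2, hp2⟩ := e2.exists
  have hlt : p1 < p2 := by
    by_contra h
    push_neg at h
    have := (strictMonoOn_Ff h0 h1 hα0 hα1).monotoneOn hp2 hp1 h
    linarith
  have hsub : Icc p1 p2 ⊆ Ioo a 1 := fun x hx => ⟨lt_of_lt_of_le hp1.1 hx.1,
    lt_of_le_of_lt hx.2 hp2.2⟩
  have hcont : ContinuousOn (Ff lam0 lam1 α) (Icc p1 p2) := fun x hx =>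
    (hasDerivAt_Ff hα0 hα1 (hsub hx).1 (hsub hx).2).continuousAt.continuousWithinAt
  have h0mem : (0:ℝ) ∈ Icc (Ff lam0 lam1 α p1) (Ff lam0 lam1 α p2) := ⟨le_of_lt hF1, le_of_lt hF2⟩
  obtain ⟨p0, hp0, hFp0⟩ := intermediate_value_Icc (le_of_lt hlt) hcont h0mem
  exact ⟨p0, hsub hp0, hFp0⟩

private lemma expr_eq_Ff {lam0 lam1 α p : ℝ} (hα0 : 0 < α) (hα1 : α < 1)
    (hpa : α / (2 - α) < p) (hp1 : p < 1) :
    α * (lam1 - lam0) * Real.log (p * (1 - qf α p) / ((1 - p) * qf α p)) +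
      lam0 * Real.log (p ^ 2 * (1 - qf α p) / (1 - p)) -
      2 * lam1 * Real.log (1 - p) = Ff lam0 lam1 α p := by
  have h2α : (0:ℝ) < 2 - α := by linarith
  have hp0 : 0 < p := lt_trans (div_pos hα0 h2α) hpa
  have hq0 : 0 < qf α p := qf_pos hα0 hp0
  have hq1 : qf α p < 1 := qf_lt_one hα0 hα1 hpa hp0
  have h1p : (0:ℝ) < 1 - p := by linarith
  have h1q : (0:ℝ) < 1 - qf α p := by linarith
  have l1 : Real.log (p * (1 - qf α p) / ((1 - p) * qf α p))
      = Real.log p + Real.log (1 - qf α p) - (Real.log (1 - p) + Real.log (qf α p)) := by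
    rw [Real.log_div (by positivity) (by positivity),
      Real.log_mul (ne_of_gt hp0) (ne_of_gt h1q),
      Real.log_mul (ne_of_gt h1p) (ne_of_gt hq0)]
  have l2 : Real.log (p ^ 2 * (1 - qf α p) / (1 - p))
      = 2 * Real.log p + Real.log (1 - qf α p) - Real.log (1 - p) := by
    rw [Real.log_div (by positivity) (ne_of_gt h1p),
      Real.log_mul (by positivity) (ne_of_gt h1q), Real.log_pow]
    push_cast
    ring
  rw [l1, l2]
  unfold Ff
  ring

theorem stmt4 (lam0 lam1 : ℝ) (h0 : 0 < lam0) (h1 : 0 < lam1)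
    (α : ℝ) (hα : α ∈ Set.Ioo (0 : ℝ) 1) :
    ∃! pq : ℝ × ℝ, pq.1 ∈ Set.Ioo (0 : ℝ) 1 ∧ pq.2 ∈ Set.Ioo (0 : ℝ) 1 ∧
      2 * pq.1 * pq.2 = α * (2 + pq.1 - pq.2) ∧
      α * (lam1 - lam0) * Real.log (pq.1 * (1 - pq.2) / ((1 - pq.1) * pq.2)) +
        lam0 * Real.log (pq.1 ^ 2 * (1 - pq.2) / (1 - pq.1)) -
        2 * lam1 * Real.log (1 - pq.1) = 0 := by
  obtain ⟨hα0, hα1⟩ := hα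
  obtain ⟨ha0, ha1⟩ := a_mem hα0 hα1
  have h2α : (0:ℝ) < 2 - α := by linarith
  obtain ⟨p0, hp0mem, hFp0⟩ := exists_Ff_zero h0 h1 hα0 hα1
  have hp00 : 0 < p0 := lt_trans ha0 hp0mem.1
  have hq00 : 0 < qf α p0 := qf_pos hα0 hp00
  have hq01 : qf α p0 < 1 := qf_lt_one hα0 hα1 hp0mem.1 hp00
  have hden0 : (0:ℝ) < 2 * p0 + α := by linarith
  refine ⟨(p0, qf α p0), ⟨⟨hp00, hp0mem.2⟩, ⟨hq00, hq01⟩, ?_, ?_⟩, ?_⟩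
  · show 2 * p0 * qf α p0 = α * (2 + p0 - qf α p0)
    rw [qf]
    field_simp
    ring
  · show α * (lam1 - lam0) * Real.log (p0 * (1 - qf α p0) / ((1 - p0) * qf α p0)) +
        lam0 * Real.log (p0 ^ 2 * (1 - qf α p0) / (1 - p0)) -
        2 * lam1 * Real.log (1 - p0) = 0
    rw [expr_eq_Ff hα0 hα1 hp0mem.1 hp0mem.2]
    exact hFp0
  · rintro ⟨p, q⟩ ⟨⟨hp0', hp1'⟩, ⟨hq0', hq1'⟩, he1, he2⟩
    simp only at he1 he2 hp0' hp1' hq0' hq1'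
    have hden : (0:ℝ) < 2 * p + α := by linarith
    have hq_eq : q = qf α p := by
      rw [qf, eq_div_iff (ne_of_gt hden)]
      linear_combination he1
    have hpa : α / (2 - α) < p := by
      rw [div_lt_iff₀ h2α]
      have h' : qf α p < 1 := hq_eq ▸ hq1'
      rw [qf, div_lt_one hden] at h'
      nlinarith
    have hFp : Ff lam0 lam1 α p = 0 := by
      rw [← expr_eq_Ff hα0 hα1 hpa hp1', ← hq_eq]
      exact he2
    have hpp : p = p0 := (strictMonoOn_Ff h0 h1 hα0 hα1).injOn ⟨hpa, hp1'⟩ hp0mem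
      (by rw [hFp, hFp0])
    have hqq : q = qf α p0 := by rw [hq_eq, hpp]
    exact Prod.ext hpp hqq
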